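/- Every integer vector (a_1,...,a_{d+1}) ∈ ℤ^{d+1} is congruent, modulo the subgroup of ℤ^{d+1} generated by the rows of M_k together with the all-ones vector (1,...,1), to a vector (c_1,...,c_{d+1}) satisfying 0 ≤ c_i ≤ k_i for all i and c_i = 0 for at least one i. -/

import Mathlib

open Finset

/-- The matrix `M_k`: diagonal entries `k i + 1`, cyclic superdiagonal entries
`-(k (i+1))` (including the bottom-left corner entry `-k 1`), zeros elsewhere. -/
def heawoodMatrix (d : ℕ) (k : Fin (d + 1) → ℤ) :
    Matrix (Fin (d + 1)) (Fin (d + 1)) ℤ :=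
  Matrix.of fun i j => if j = i then k i + 1 else if j = i + 1 then -k (i + 1) else 0

lemma heawood_succ_ne (d : ℕ) (hd : 1 ≤ d) (i : Fin (d + 1)) : i + 1 ≠ i := by
  intro h
  have h1 : (1 : Fin (d + 1)) = 0 := by
    calc (1 : Fin (d+1)) = i + 1 - i := by abel
    _ = i - i := by rw [h]
    _ = 0 := by abel
  have := congrArg Fin.val h1
  simp [Fin.val_one', Nat.mod_eq_of_lt (by omega : 1 < d + 1)] at this

lemma heawood_reduce (d : ℕ) (hd : 1 ≤ d) (k : Fin (d + 1) → ℤ) (hk : ∀ i, 0 < k i)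
    (L : AddSubgroup (Fin (d + 1) → ℤ))
    (hrow : ∀ i, heawoodMatrix d k i ∈ L) :
    ∀ N : ℕ, ∀ a : Fin (d + 1) → ℤ, (∀ i, 0 ≤ a i) →
      (∑ i, a i * ∏ j ∈ Finset.univ.erase i, (k j + 1)).toNat ≤ N →
      ∃ c : Fin (d + 1) → ℤ, (∀ i, 0 ≤ c i ∧ c i ≤ k i) ∧ a - c ∈ L := by
  set W : Fin (d + 1) → ℤ := fun i => ∏ j ∈ Finset.univ.erase i, (k j + 1) with hWdef
  have hW : ∀ i, 0 < W i := fun i => Finset.prod_pos fun j _ => by linarith [hk j]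
  have hP : ∀ i, (k i + 1) * W i = ∏ j, (k j + 1) := fun i =>
    Finset.mul_prod_erase univ (fun j => k j + 1) (mem_univ i)
  have hne := heawood_succ_ne d hd
  -- matrix entry values
  have hMd : ∀ i : Fin (d + 1), heawoodMatrix d k i i = k i + 1 := by
    intro i; simp [heawoodMatrix]
  have hMs : ∀ i : Fin (d + 1), heawoodMatrix d k i (i + 1) = -k (i + 1) := by
    intro i; simp [heawoodMatrix, hne i]
  have hMo : ∀ i j : Fin (d + 1), j ≠ i → j ≠ i + 1 → heawoodMatrix d k i j = 0 := by
    intro i j h1 h2; simp [heawoodMatrix, h1, h2]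
  -- key firing computation
  have hfire : ∀ i : Fin (d + 1),
      ∑ j, heawoodMatrix d k i j * W j = W (i + 1) := by
    intro i
    have hsplit : ∀ j, heawoodMatrix d k i j * W j =
        (if j = i then (k i + 1) * W i else 0) +
        (if j = i + 1 then -k (i + 1) * W (i + 1) else 0) := by
      intro j
      by_cases h1 : j = i
      · subst h1
        rw [hMd j, if_pos rfl, if_neg (fun h => hne j h.symm)]
        ring
      · by_cases h2 : j = i + 1
        · subst h2
          rw [hMs i, if_neg h1, if_pos rfl]
          ring
        · rw [hMo i j h1 h2, if_neg h1, if_neg h2]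
          ring
    rw [Finset.sum_congr rfl fun j _ => hsplit j, Finset.sum_add_distrib]
    simp only [Finset.sum_ite_eq', Finset.mem_univ, if_true]
    have h1 := hP i
    have h2 := hP (i + 1)
    linarith
  intro N
  induction N with
  | zero =>
    intro a ha hle
    have hle' : (∑ j, a j * W j).toNat ≤ 0 := hle
    by_cases h : ∀ i, a i ≤ k i
    · exact ⟨a, fun i => ⟨ha i, h i⟩, by simpa using L.zero_mem⟩
    · exfalso
      push_neg at h
      obtain ⟨i, hi⟩ := h
      have h1 : a i * W i ≤ ∑ j, a j * W j :=
        Finset.single_le_sum (fun j _ => mul_nonneg (ha j) (hW j).le) (mem_univ i)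
      have h2 : 0 < a i * W i := mul_pos (by linarith [hk i]) (hW i)
      omega
  | succ N ih =>
    intro a ha hle
    have hle' : (∑ j, a j * W j).toNat ≤ N + 1 := hle
    by_cases h : ∀ i, a i ≤ k i
    · exact ⟨a, fun i => ⟨ha i, h i⟩, by simpa using L.zero_mem⟩
    · push_neg at h
      obtain ⟨i, hi⟩ := h
      set a' : Fin (d + 1) → ℤ := a - heawoodMatrix d k i with ha'def
      have ha'val : ∀ j, a' j = a j - heawoodMatrix d k i j := fun j => rfl
      have ha'nonneg : ∀ j, 0 ≤ a' j := by
        intro j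
        rw [ha'val]
        by_cases h1 : j = i
        · subst h1; rw [hMd j]; linarith
        · by_cases h2 : j = i + 1
          · subst h2
            rw [hMs i]
            have := hk (i + 1); have := ha (i + 1)
            linarith
          · rw [hMo i j h1 h2]
            linarith [ha j]
      have hkey : ∑ j, a' j * W j = (∑ j, a j * W j) - W (i + 1) := by
        have heq : ∀ j, a' j * W j = a j * W j - heawoodMatrix d k i j * W j := by
          intro j; rw [ha'val]; ring
        rw [Finset.sum_congr rfl fun j _ => heq j, Finset.sum_sub_distrib, hfire]
      have hμ'nonneg : 0 ≤ ∑ j, a' j * W j :=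
        Finset.sum_nonneg fun j _ => mul_nonneg (ha'nonneg j) (hW j).le
      have hmeas : (∑ j, a' j * W j).toNat ≤ N := by
        have := hW (i + 1); omega
      obtain ⟨c, hc1, hc2⟩ := ih a' ha'nonneg hmeas
      refine ⟨c, hc1, ?_⟩
      have heq2 : a - c = (a' - c) + heawoodMatrix d k i := by
        funext j
        have := ha'val j
        simp only [Pi.add_apply, Pi.sub_apply] at *
        omega
      rw [heq2]
      exact L.add_mem hc2 (hrow i)

theorem exists_fundamental_representative (d : ℕ) (hd : 1 ≤ d)
    (k : Fin (d + 1) → ℤ) (hk : ∀ i, 0 < k i)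
    (L : AddSubgroup (Fin (d + 1) → ℤ))
    (hL : L = AddSubgroup.closure
      (Set.range (fun i => heawoodMatrix d k i) ∪ {fun _ => (1 : ℤ)}))
    (a : Fin (d + 1) → ℤ) :
    ∃ c : Fin (d + 1) → ℤ,
      (∀ i, 0 ≤ c i ∧ c i ≤ k i) ∧ (∃ i, c i = 0) ∧ a - c ∈ L := by
  have hrow : ∀ i, heawoodMatrix d k i ∈ L := fun i =>
    hL ▸ AddSubgroup.subset_closure (Or.inl ⟨i, rfl⟩)
  have hu : (fun _ => (1 : ℤ)) ∈ L :=
    hL ▸ AddSubgroup.subset_closure (Or.inr rfl)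
  -- Phase A: shift to nonnegative
  set Nshift : ℤ := ∑ i, |a i| with hN
  set b : Fin (d + 1) → ℤ := fun i => a i + Nshift with hb
  have hbnonneg : ∀ i, 0 ≤ b i := by
    intro i
    have h1 : |a i| ≤ Nshift :=
      Finset.single_le_sum (fun j _ => abs_nonneg (a j)) (mem_univ i)
    have h2 := neg_abs_le (a i)
    show 0 ≤ a i + Nshift
    linarith
  -- Phase B: reduce into the box
  obtain ⟨c', hc'1, hc'2⟩ := heawood_reduce d hd k hk L hrow
    (∑ i, b i * ∏ j ∈ Finset.univ.erase i, (k j + 1)).toNat b hbnonneg le_rfl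
  -- Phase C: subtract min to get a zero coordinate
  obtain ⟨i₀, hi₀⟩ := Finite.exists_min c'
  refine ⟨fun i => c' i - c' i₀, fun i => ⟨?_, ?_⟩, ⟨i₀, by simp⟩, ?_⟩
  · show 0 ≤ c' i - c' i₀
    linarith [hi₀ i]
  · show c' i - c' i₀ ≤ k i
    linarith [(hc'1 i).2, (hc'1 i₀).1]
  · have heq : (a - fun i => c' i - c' i₀)
        = (b - c') + (c' i₀ - Nshift) • (fun _ => (1 : ℤ)) := by
      funext j
      show a j - (c' j - c' i₀) = (b j - c' j) + (c' i₀ - Nshift) * 1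
      show a j - (c' j - c' i₀) = ((a j + Nshift) - c' j) + (c' i₀ - Nshift) * 1
      ring
    rw [heq]
    exact L.add_mem hc'2 (AddSubgroup.zsmul_mem L hu (c' i₀ - Nshift))
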